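/- arXiv:1807.08162 — 2 statements merged into one kernel-verified Lean document; each statement's English description precedes it below -/
import Mathlib

section
/- Let n ≥ 1. Every polynomial R ∈ ℚ[x,y] that is weighted homogeneous of degree n+3, lies in the ideal (h_{n+1}, h_{n+2}), and lies in the ideal (y²), is a ℚ-scalar multiple of y²·h_{n−1}. -/
open MvPolynomial

/-- The complete homogeneous symmetric polynomial of degree `k` in two variables,
expressed in the elementary symmetric polynomials `x = X 0`, `y = X 1`. -/
noncomputable def h : ℕ → MvPolynomial (Fin 2) ℚ
  | 0 => 1
  | 1 => X 0
  | (k + 2) => X 0 * h (k + 1) - X 1 * h k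

lemma hrec (k : ℕ) : h (k + 2) = X 0 * h (k + 1) - X 1 * h k := rfl

lemma iwh_sub {w : Fin 2 → ℕ} {p q : MvPolynomial (Fin 2) ℚ} {m : ℕ}
    (hp : p.IsWeightedHomogeneous w m) (hq : q.IsWeightedHomogeneous w m) :
    (p - q).IsWeightedHomogeneous w m := by
  have := Submodule.sub_mem (weightedHomogeneousSubmodule ℚ w m)
    ((mem_weightedHomogeneousSubmodule _ _ _ _).mpr hp)
    ((mem_weightedHomogeneousSubmodule _ _ _ _).mpr hq)
  exact (mem_weightedHomogeneousSubmodule _ _ _ _).mp this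

lemma hHom : ∀ k, (h k).IsWeightedHomogeneous ![1, 2] k
  | 0 => isWeightedHomogeneous_one ℚ _
  | 1 => by rw [show h 1 = X 0 from rfl]; simpa using isWeightedHomogeneous_X ℚ ![1, 2] 0
  | (k + 2) => by
      have h1 := hHom (k + 1)
      have h0 := hHom k
      have hx : (X 0 : MvPolynomial (Fin 2) ℚ).IsWeightedHomogeneous ![1, 2] 1 := by
        simpa using isWeightedHomogeneous_X ℚ ![1, 2] 0
      have hy : (X 1 : MvPolynomial (Fin 2) ℚ).IsWeightedHomogeneous ![1, 2] 2 := by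
        simpa using isWeightedHomogeneous_X ℚ ![1, 2] 1
      rw [hrec]
      have e1 : (X 0 * h (k + 1)).IsWeightedHomogeneous ![1, 2] (k + 2) := by
        have := hx.mul h1; convert this using 1; omega
      have e2 : (X 1 * h k).IsWeightedHomogeneous ![1, 2] (k + 2) := by
        have := hy.mul h0; convert this using 1; omega
      exact iwh_sub e1 e2

lemma hφ : ∀ k, aeval ![X 0, (0 : MvPolynomial (Fin 2) ℚ)] (h k) = X 0 ^ k
  | 0 => by simp [h]
  | 1 => by simp [h]
  | (k + 2) => by
      rw [hrec, map_sub, map_mul, map_mul, hφ (k + 1), hφ k, aeval_X, aeval_X]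
      simp only [Matrix.cons_val_zero, Matrix.cons_val_one, Matrix.head_cons]
      ring

lemma hφ' : ∀ k, bind₁ ![X 0, (0 : MvPolynomial (Fin 2) ℚ)] (h k) = X 0 ^ k := hφ

lemma weight_eq (d : Fin 2 →₀ ℕ) : (Finsupp.weight ![1, 2]) d = d 0 + 2 * d 1 := by
  rw [Finsupp.weight_apply, Finsupp.sum_fintype]
  · simp [Fin.sum_univ_two]; ring
  · intro i; simp

lemma comp_mul {k nn mm : ℕ} (P q : MvPolynomial (Fin 2) ℚ)
    (hq : q.IsWeightedHomogeneous ![1, 2] k) (hkn : mm + k = nn) :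
    weightedHomogeneousComponent ![1, 2] nn (P * q)
      = weightedHomogeneousComponent ![1, 2] mm P * q := by
  classical
  subst hkn
  conv_lhs => rw [← sum_weightedHomogeneousComponent ![1, 2] P]
  rw [finsum_eq_sum _ (weightedHomogeneousComponent_finsupp P), Finset.sum_mul, map_sum]
  rw [Finset.sum_eq_single mm]
  · exact ((weightedHomogeneousComponent_isWeightedHomogeneous mm P).mul hq).weightedHomogeneousComponent_same
  · intro j _ hj
    exact ((weightedHomogeneousComponent_isWeightedHomogeneous j P).mul
      hq).weightedHomogeneousComponent_ne _ (by omega)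
  · intro hmm
    have : weightedHomogeneousComponent ![1, 2] mm P = 0 := by
      by_contra hc; exact hmm ((Set.Finite.mem_toFinset _).mpr hc)
    simp [this]

lemma homog_two {P : MvPolynomial (Fin 2) ℚ} (hP : P.IsWeightedHomogeneous ![1, 2] 2) :
    ∃ a b : ℚ, P = C a * X 0 ^ 2 + C b * X 1 := by
  classical
  refine ⟨coeff (Finsupp.single 0 2) P, coeff (Finsupp.single 1 1) P, ?_⟩
  have hX1 : (X 1 : MvPolynomial (Fin 2) ℚ) = monomial (Finsupp.single 1 1) 1 := by
    rw [← pow_one (X 1 : MvPolynomial (Fin 2) ℚ), X_pow_eq_monomial]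
  ext d
  rw [coeff_add, X_pow_eq_monomial, hX1, coeff_C_mul, coeff_C_mul, coeff_monomial,
    coeff_monomial]
  by_cases h0 : (Finsupp.single 0 2 : Fin 2 →₀ ℕ) = d
  · have hne : ¬ (Finsupp.single 1 1 : Fin 2 →₀ ℕ) = d := by
      rw [← h0]; intro hc
      have := DFunLike.congr_fun hc (0 : Fin 2); simp at this
    rw [if_pos h0, if_neg hne, ← h0]; ring
  by_cases h1 : (Finsupp.single 1 1 : Fin 2 →₀ ℕ) = d
  · rw [if_pos h1, if_neg h0, ← h1]; ring
  rw [if_neg h0, if_neg h1]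
  by_contra hc
  have hw := hP (by simpa using hc)
  rw [weight_eq] at hw
  rcases (by omega : (d 0 = 2 ∧ d 1 = 0) ∨ (d 0 = 0 ∧ d 1 = 1)) with ⟨h2, h3⟩ | ⟨h2, h3⟩
  · exact h0 (by ext i; fin_cases i <;> simp [Finsupp.single_apply, h2, h3])
  · exact h1 (by ext i; fin_cases i <;> simp [Finsupp.single_apply, h2, h3])

lemma homog_one {P : MvPolynomial (Fin 2) ℚ} (hP : P.IsWeightedHomogeneous ![1, 2] 1) :
    ∃ e : ℚ, P = C e * X 0 := by
  classical
  refine ⟨coeff (Finsupp.single 0 1) P, ?_⟩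
  have hX0 : (X 0 : MvPolynomial (Fin 2) ℚ) = monomial (Finsupp.single 0 1) 1 := by
    rw [← pow_one (X 0 : MvPolynomial (Fin 2) ℚ), X_pow_eq_monomial]
  ext d
  rw [hX0, coeff_C_mul, coeff_monomial]
  by_cases h0 : (Finsupp.single 0 1 : Fin 2 →₀ ℕ) = d
  · rw [if_pos h0, ← h0]; ring
  rw [if_neg h0]
  by_contra hc
  have hw := hP (by simpa using hc)
  rw [weight_eq] at hw
  have h2 : d 0 = 1 ∧ d 1 = 0 := by omega
  exact h0 (by ext i; fin_cases i <;> simp [Finsupp.single_apply, h2.1, h2.2])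

/-- Every weighted homogeneous polynomial of degree `n+3` (with `deg x = 1`, `deg y = 2`)
lying both in the ideal `(h_{n+1}, h_{n+2})` and in the ideal `(y²)` is a scalar multiple
of `y²·h_{n−1}`. -/
theorem stmt8 (n : ℕ) (hn : 1 ≤ n) (R : MvPolynomial (Fin 2) ℚ)
    (hR : R.IsWeightedHomogeneous ![1, 2] (n + 3))
    (hI : R ∈ (Ideal.span {h (n + 1), h (n + 2)} : Ideal (MvPolynomial (Fin 2) ℚ)))
    (hy : R ∈ (Ideal.span {X 1 ^ 2} : Ideal (MvPolynomial (Fin 2) ℚ))) :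
    ∃ c : ℚ, R = C c * (X 1 ^ 2 * h (n - 1)) := by
  classical
  obtain ⟨P, Q, hPQ⟩ := Ideal.mem_span_pair.mp hI
  obtain ⟨S, hS⟩ := Ideal.mem_span_singleton'.mp hy
  obtain ⟨m, rfl⟩ : ∃ m, n = m + 1 := ⟨n - 1, (Nat.succ_pred_eq_of_pos hn).symm⟩
  have hcomp : R = weightedHomogeneousComponent ![1, 2] 2 P * h (m + 1 + 1)
      + weightedHomogeneousComponent ![1, 2] 1 Q * h (m + 1 + 2) := by
    conv_lhs => rw [← hR.weightedHomogeneousComponent_same, ← hPQ]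
    rw [map_add, comp_mul (k := m + 1 + 1) (nn := m + 1 + 3) (mm := 2) P _ (hHom (m + 1 + 1))
      (by omega), comp_mul (k := m + 1 + 2) (nn := m + 1 + 3) (mm := 1) Q _ (hHom (m + 1 + 2))
      (by omega)]
  obtain ⟨a, b, hab⟩ := homog_two (weightedHomogeneousComponent_isWeightedHomogeneous 2 P)
  obtain ⟨e, he⟩ := homog_one (weightedHomogeneousComponent_isWeightedHomogeneous 1 Q)
  have e4 : h (m + 1 + 3) = X 0 * h (m + 1 + 2) - X 1 * h (m + 1 + 1) := hrec (m + 1 + 1)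
  have e3 : h (m + 1 + 2) = X 0 * h (m + 1 + 1) - X 1 * h (m + 1) := hrec (m + 1)
  have e2 : h (m + 1 + 1) = X 0 * h m.succ - X 1 * h m := hrec m
  have key2 : R = C (a + e) * h (m + 1 + 3)
      + C (2 * a + b + e) * (X 1 * h (m + 1 + 1)) + C a * (X 1 ^ 2 * h m) := by
    rw [hcomp, hab, he, e4, e3, e2]
    simp only [C_add, C_mul, map_ofNat]
    ring
  have hR0 : aeval ![X 0, (0 : MvPolynomial (Fin 2) ℚ)] R = 0 := by
    rw [← hS]; simp
  have hA := congrArg (aeval ![X 0, (0 : MvPolynomial (Fin 2) ℚ)]) key2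
  rw [hR0] at hA
  simp only [map_add, map_mul, map_pow, aeval_C, aeval_X, algebraMap_eq, hφ,
    Matrix.cons_val_zero, Matrix.cons_val_one, Matrix.head_cons, mul_zero, zero_mul,
    add_zero, zero_add, ne_eq, OfNat.ofNat_ne_zero, not_false_eq_true, zero_pow] at hA
  have hae : (C a + C e : MvPolynomial (Fin 2) ℚ) = 0 := by
    rcases mul_eq_zero.mp hA.symm with hz | hz
    · exact hz
    · exact absurd hz (pow_ne_zero _ (X_ne_zero 0))
  have key3 : R = (2 * C a + C b + C e) * (X 1 * h (m + 1 + 1)) + C a * (X 1 ^ 2 * h m) := by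
    rw [key2]
    simp only [C_add, C_mul, map_ofNat]
    rw [hae]; ring
  have hR1 : aeval ![X 0, (0 : MvPolynomial (Fin 2) ℚ)] (pderiv 1 R) = 0 := by
    rw [← hS]
    simp [pderiv_mul, pderiv_pow, pderiv_X_self]
  have hB := congrArg (fun p => aeval ![X 0, (0 : MvPolynomial (Fin 2) ℚ)] (pderiv 1 p)) key3
  rw [hR1] at hB
  simp [pderiv_C_mul, pderiv_mul, pderiv_pow, pderiv_X_self, hφ, hφ', map_ofNat] at hB
  have hbe : (2 * C a + C b + C e : MvPolynomial (Fin 2) ℚ) = 0 := hB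
  refine ⟨a, ?_⟩
  rw [key3, hbe]
  simp
end

section
/- Let n ≥ 1 and set Q = 2x²y + y² ∈ ℚ[x,y] (up to the factor 9, Q is the class of the Fano variety of lines of a smooth cubic hypersurface in the Chow ring of the Grassmannian of lines in ℙ^{n+1}). Then: (i) there exists a nonzero polynomial P ∈ ℚ[x,y], weighted homogeneous of degree n−1, such that P·Q ∈ (h_{n+1}, h_{n+2}); and (ii) every nonzero weighted-homogeneous P of degree n−1 with P·Q ∈ (h_{n+1}, h_{n+2}) has nonzero coefficient of the monomial x^{n−1}. (Algebraic form of Proposition 2.7: there is a weighted-degree-(n−1) polynomial relation P(c₁,c₂) = 0 on the Fano variety of lines whose coefficient of c₁^{n−1} is nonzero.) -/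
open MvPolynomial

open Finsupp

abbrev MvP := MvPolynomial (Fin 2) ℚ

noncomputable def Qp : MvP := 2 * X 0 ^ 2 * X 1 + X 1 ^ 2

noncomputable def psi : MvP →ₐ[ℚ] MvP := aeval ![X 0 + X 1, X 0 * X 1]

lemma h_rec (k : ℕ) : h (k+2) = X 0 * h (k+1) - X 1 * h k := by rw [h]

lemma hQh (m : ℕ) : Qp * h (m+2) =
    2*X 1*h (m+4) + 5*X 1^2*h (m+2) + 2*X 1^3*h m := by
  have e2 : h (m+2) = X 0 * h (m+1) - X 1 * h m := h_rec m
  have e3 : h (m+3) = X 0 * h (m+2) - X 1 * h (m+1) := h_rec (m+1)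
  have e4 : h (m+4) = X 0 * h (m+3) - X 1 * h (m+2) := h_rec (m+2)
  rw [Qp, e4, e3, e2]; ring

lemma hy2 (k : ℕ) : X 1^2 * h k = X 0^2 * h (k+2) - X 0 * h (k+3) - X 1 * h (k+2) := by
  have e2 : h (k+2) = X 0 * h (k+1) - X 1 * h k := h_rec k
  have e3 : h (k+3) = X 0 * h (k+2) - X 1 * h (k+1) := h_rec (k+1)
  rw [e3, e2]; ring

lemma h_wh (k : ℕ) : (h k).IsWeightedHomogeneous ![1,2] k := by
  induction k using Nat.twoStepInduction with
  | zero => exact isWeightedHomogeneous_one ℚ _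
  | one =>
      have := isWeightedHomogeneous_X ℚ ![1,2] 0
      simpa [h] using this
  | more k ih ih1 =>
      rw [h_rec]
      have hX0 : (X 0 : MvP).IsWeightedHomogeneous ![1,2] 1 := by
        have := isWeightedHomogeneous_X ℚ ![1,2] 0; simpa using this
      have hX1 : (X 1 : MvP).IsWeightedHomogeneous ![1,2] 2 := by
        have := isWeightedHomogeneous_X ℚ ![1,2] 1; simpa using this
      have t1 := hX0.mul ih1
      have t2 := hX1.mul ih
      rw [show (1 + (k+1) : ℕ) = k + 2 by omega] at t1
      rw [show (2 + k : ℕ) = k + 2 by omega] at t2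
      have m1 : X 0 * h (k+1) ∈ weightedHomogeneousSubmodule ℚ ![1,2] (k+2) :=
        (mem_weightedHomogeneousSubmodule _ _ _ _).2 t1
      have m2 : X 1 * h k ∈ weightedHomogeneousSubmodule ℚ ![1,2] (k+2) :=
        (mem_weightedHomogeneousSubmodule _ _ _ _).2 t2
      exact (mem_weightedHomogeneousSubmodule _ _ _ _).1
        ((weightedHomogeneousSubmodule ℚ ![1,2] (k+2)).sub_mem m1 m2)

lemma h_top (k : ℕ) : coeff (Finsupp.single 0 k) (h k) = 1 := by
  induction k using Nat.twoStepInduction with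
  | zero => simp [h]
  | one => simp [h]
  | more k ih ih1 =>
      rw [h_rec, coeff_sub]
      have e : (Finsupp.single (0 : Fin 2) (k+2)) = Finsupp.single 0 1 + Finsupp.single 0 (k+1) := by
        rw [← Finsupp.single_add]; congr 1; omega
      have h1 : coeff (Finsupp.single 0 (k+2)) (X 0 * h (k+1)) = 1 := by
        rw [e, coeff_X_mul, ih1]
      have h2 : coeff (Finsupp.single 0 (k+2)) (X 1 * h k) = 0 := by
        rw [coeff_X_mul']
        simp
      rw [h1, h2, sub_zero]
lemma Gzero (i : Fin 2) (q : ℕ) (g : MvP) (m : Fin 2 →₀ ℕ) (hm : m i < q) :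
    coeff m (X i ^ q * g) = 0 := by
  rw [X_pow_eq_monomial, coeff_monomial_mul']
  rw [if_neg]
  rw [Finsupp.single_le_iff]
  omega

lemma Gexact (i : Fin 2) (q : ℕ) (g : MvP) (m : Fin 2 →₀ ℕ) :
    coeff (Finsupp.single i q + m) (X i ^ q * g) = coeff m g := by
  rw [X_pow_eq_monomial, coeff_monomial_mul, one_mul]

lemma pair_eq {p q s t : ℕ} :
    (Finsupp.single (0 : Fin 2) p + Finsupp.single 1 q = Finsupp.single 0 s + Finsupp.single 1 t)
    ↔ (p = s ∧ q = t) := by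
  constructor
  · intro H
    constructor
    · have := DFunLike.congr_fun H 0
      simpa using this
    · have := DFunLike.congr_fun H 1
      simpa using this
  · rintro ⟨rfl, rfl⟩; rfl

lemma mdecomp (m : Fin 2 →₀ ℕ) : m = Finsupp.single 0 (m 0) + Finsupp.single 1 (m 1) := by
  ext i
  fin_cases i <;> simp [Finsupp.single_apply]

lemma weight_pair (s t : ℕ) :
    (weight ![1,2] : (Fin 2 →₀ ℕ) →+ ℕ) (Finsupp.single 0 s + Finsupp.single 1 t) = s + 2*t := by
  rw [map_add]
  simp [weight_apply, Finsupp.sum_single_index]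
  ring

lemma degree_pair (s t : ℕ) :
    Finsupp.degree (Finsupp.single (0:Fin 2) s + Finsupp.single 1 t) = s + t := by
  rw [Finsupp.degree_eq_weight_one]
  rw [map_add]
  simp [weight_apply, Finsupp.sum_single_index]

lemma Lbin (a p t : ℕ) :
    coeff (Finsupp.single 0 p + Finsupp.single 1 t) ((X 0 + X 1)^a : MvP) =
    if p + t = a then (a.choose p : ℚ) else 0 := by
  rw [add_pow]
  rw [coeff_sum]
  have hterm : ∀ k, (X 0:MvP)^k * X 1^(a-k) * (a.choose k : MvP) =
      monomial (Finsupp.single 0 k + Finsupp.single 1 (a-k)) ((a.choose k : ℚ)) := by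
    intro k
    rw [X_pow_eq_monomial, X_pow_eq_monomial, monomial_mul, one_mul]
    rw [show ((a.choose k : MvP)) = C ((a.choose k : ℚ)) by push_cast; rfl]
    rw [mul_comm, C_mul_monomial, mul_one]
  by_cases hpt : p + t = a
  · rw [if_pos hpt]
    rw [Finset.sum_eq_single p]
    · rw [hterm p, coeff_monomial, if_pos]
      rw [pair_eq]
      omega
    · intro k hk hkp
      rw [hterm k, coeff_monomial, if_neg]
      rw [pair_eq]
      omega
    · intro hp
      simp only [Finset.mem_range] at hp
      omega
  · rw [if_neg hpt]
    apply Finset.sum_eq_zero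
    intro k hk
    simp only [Finset.mem_range] at hk
    rw [hterm k, coeff_monomial, if_neg]
    rw [pair_eq]
    omega

lemma NF {d : ℕ} {P : MvP} (hP : P.IsWeightedHomogeneous ![1,2] d) :
    P = ∑ b ∈ Finset.range (d/2+1),
      monomial (Finsupp.single 0 (d - 2*b) + Finsupp.single 1 b)
        (coeff (Finsupp.single 0 (d - 2*b) + Finsupp.single 1 b) P) := by
  apply MvPolynomial.ext
  intro m
  obtain ⟨s, t, rfl⟩ : ∃ s t, m = Finsupp.single 0 s + Finsupp.single 1 t :=
    ⟨m 0, m 1, mdecomp m⟩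
  rw [coeff_sum]
  by_cases hm : s + 2*t = d
  · rw [Finset.sum_eq_single t]
    · have hds : d - 2*t = s := by omega
      rw [hds, coeff_monomial, if_pos rfl]
    · intro k hk hkm
      rw [coeff_monomial, if_neg]
      rw [pair_eq]
      simp only [Finset.mem_range] at hk
      omega
    · intro hm1
      simp only [Finset.mem_range] at hm1
      omega
  · have hc : coeff (Finsupp.single (0:Fin 2) s + Finsupp.single 1 t) P = 0 := by
      apply hP.coeff_eq_zero
      rw [weight_pair]
      omega
    rw [hc]
    symm
    apply Finset.sum_eq_zero
    intro k hk
    simp only [Finset.mem_range] at hk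
    rw [coeff_monomial, if_neg]
    rw [pair_eq]
    omega

lemma psi_monomial (s t : ℕ) (c : ℚ) :
    psi (monomial (Finsupp.single 0 s + Finsupp.single 1 t) c) =
    C c * ((X 0 + X 1)^s * (X 0 * X 1)^t) := by
  have e : (monomial (Finsupp.single 0 s + Finsupp.single 1 t) c : MvP)
      = C c * (X 0^s * X 1^t) := by
    rw [X_pow_eq_monomial, X_pow_eq_monomial, monomial_mul, one_mul, C_mul_monomial, mul_one]
  rw [e, map_mul, map_mul, map_pow, map_pow]
  have hx : psi (X 0) = X 0 + X 1 := by simp [psi]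
  have hy : psi (X 1) = X 0 * X 1 := by simp [psi]
  have hc : psi (C c) = C c := by simp [psi, algebraMap_eq]
  rw [hx, hy, hc]

lemma psi_h (k : ℕ) : (X 0 - X 1) * psi (h k) = X 0^(k+1) - X 1^(k+1) := by
  induction k using Nat.twoStepInduction with
  | zero => simp [h, psi]
  | one => simp [h, psi]; ring
  | more k ih ih1 =>
      rw [h_rec, map_sub, map_mul, map_mul]
      have hx : psi (X 0) = X 0 + X 1 := by simp [psi]
      have hy : psi (X 1) = X 0 * X 1 := by simp [psi]
      rw [hx, hy]
      linear_combination (X 0 + X 1 : MvP) * ih1 - (X 0 * X 1 : MvP) * ih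

lemma Cnum {a b c : ℚ} (x y z : ℚ)
    (hh : x*a + y*b + z*c = 0) : C x * C a + C y * C b + C z * C c = (0:MvP) := by
  rw [← C_mul, ← C_mul, ← C_mul, ← C_add, ← C_add, hh, C_0]

lemma master0 (d : ℕ → ℚ) (hrec : ∀ j, 2*d (j+2) + 5*d (j+1) + 2*d j = 0)
    (hbd : 3*d 0 + 2*d 1 = 0) (B : ℕ) :
    Qp * (∑ j ∈ Finset.range (B+1), C (d j) * (X 1^(B-j) * h (2*j))) =
    2 * C (d B) * (X 1 * h (2*B+2)) - 2 * C (d (B+1)) * (X 1^2 * h (2*B)) := by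
  induction B with
  | zero =>
      have HC : (3:MvP) * C (d 0) + (2:MvP) * C (d 1) + (0:MvP) * C (d 0) = 0 := by
        have := Cnum (a := d 0) (b := d 1) (c := d 0) 3 2 0 (by linarith)
        simpa only [map_ofNat, C_0] using this
      simp only [Nat.zero_add, Finset.sum_range_one, Nat.sub_self, pow_zero, Nat.mul_zero,
        one_mul, Nat.mul_one, zero_add]
      have e0 : h 0 = 1 := rfl
      have e1 : h 1 = X 0 := rfl
      have e2 : h 2 = X 0 * h 1 - X 1 * h 0 := h_rec 0
      rw [Qp, e2, e1, e0]
      linear_combination (X 1^2 : MvP) * HC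
  | succ B ih =>
      have HC : (2:MvP) * C (d (B+2)) + (5:MvP) * C (d (B+1)) + (2:MvP) * C (d B) = 0 := by
        have := Cnum (a := d (B+2)) (b := d (B+1)) (c := d B) 2 5 2 (hrec B)
        simpa only [map_ofNat] using this
      rw [Finset.sum_range_succ]
      have hsum : ∑ j ∈ Finset.range (B+1), C (d j) * (X 1^(B+1-j) * h (2*j)) =
          X 1 * ∑ j ∈ Finset.range (B+1), C (d j) * (X 1^(B-j) * h (2*j)) := by
        rw [Finset.mul_sum]
        apply Finset.sum_congr rfl
        intro j hj
        simp only [Finset.mem_range] at hj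
        rw [show B+1-j = (B-j)+1 by omega, pow_succ]
        ring
      rw [hsum]
      rw [show 2*(B+1) = 2*B+2 by ring]
      rw [show 2*B+2+2 = 2*B+4 from rfl]
      simp only [Nat.sub_self, pow_zero, one_mul]
      have hq := hQh (2*B)
      linear_combination (X 1 : MvP) * ih + C (d (B+1)) * hq + (X 1^2 * h (2*B+2)) * HC

lemma master1 (d : ℕ → ℚ) (hrec : ∀ j, 2*d (j+2) + 5*d (j+1) + 2*d j = 0)
    (hbd : 5*d 0 + 2*d 1 = 0) (B : ℕ) :
    Qp * (∑ j ∈ Finset.range (B+1), C (d j) * (X 1^(B-j) * h (2*j+1))) =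
    2 * C (d B) * (X 1 * h (2*B+3)) - 2 * C (d (B+1)) * (X 1^2 * h (2*B+1)) := by
  induction B with
  | zero =>
      have HC : (5:MvP) * C (d 0) + (2:MvP) * C (d 1) + (0:MvP) * C (d 0) = 0 := by
        have := Cnum (a := d 0) (b := d 1) (c := d 0) 5 2 0 (by linarith)
        simpa only [map_ofNat, C_0] using this
      simp only [Nat.zero_add, Finset.sum_range_one, Nat.sub_self, pow_zero, Nat.mul_zero,
        one_mul, Nat.mul_one, zero_add]
      have e0 : h 0 = 1 := rfl
      have e1 : h 1 = X 0 := rfl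
      have e2 : h 2 = X 0 * h 1 - X 1 * h 0 := h_rec 0
      have e3 : h 3 = X 0 * h 2 - X 1 * h 1 := h_rec 1
      rw [Qp, e3, e2, e1, e0]
      linear_combination (X 0 * X 1^2 : MvP) * HC
  | succ B ih =>
      have HC : (2:MvP) * C (d (B+2)) + (5:MvP) * C (d (B+1)) + (2:MvP) * C (d B) = 0 := by
        have := Cnum (a := d (B+2)) (b := d (B+1)) (c := d B) 2 5 2 (hrec B)
        simpa only [map_ofNat] using this
      rw [Finset.sum_range_succ]
      have hsum : ∑ j ∈ Finset.range (B+1), C (d j) * (X 1^(B+1-j) * h (2*j+1)) =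
          X 1 * ∑ j ∈ Finset.range (B+1), C (d j) * (X 1^(B-j) * h (2*j+1)) := by
        rw [Finset.mul_sum]
        apply Finset.sum_congr rfl
        intro j hj
        simp only [Finset.mem_range] at hj
        rw [show B+1-j = (B-j)+1 by omega, pow_succ]
        ring
      rw [hsum]
      rw [show 2*(B+1) = 2*B+2 by ring]
      rw [show 2*B+2+3 = 2*B+5 from rfl, show 2*B+2+1 = 2*B+3 from rfl]
      simp only [Nat.sub_self, pow_zero, one_mul]
      have hq : Qp * h (2*B+3) = 2*X 1*h (2*B+5) + 5*X 1^2*h (2*B+3) + 2*X 1^3*h (2*B+1) :=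
        hQh (2*B+1)
      linear_combination (X 1 : MvP) * ih + C (d (B+1)) * hq + (X 1^2 * h (2*B+3)) * HC

lemma whX1pow (k : ℕ) : (X 1 ^ k : MvP).IsWeightedHomogeneous ![1,2] (2*k) := by
  induction k with
  | zero => simpa using isWeightedHomogeneous_one ℚ (M := ℕ) (![1,2] : Fin 2 → ℕ)
  | succ k ih =>
      have h2 : (X 1 : MvP).IsWeightedHomogeneous ![1,2] 2 := by
        simpa using isWeightedHomogeneous_X ℚ ![1,2] 1
      have := ih.mul h2
      rw [pow_succ]
      rw [show 2*(k+1) = 2*k + 2 by ring]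
      exact this

lemma singleone (s : ℕ) : (Finsupp.single (0 : Fin 2) s) 1 = 0 := by
  simp [Finsupp.single_apply]

lemma partI (n : ℕ) (hn : 1 ≤ n) :
    ∃ P : MvP, P ≠ 0 ∧ P.IsWeightedHomogeneous ![1, 2] (n - 1) ∧
      P * (2 * X 0 ^ 2 * X 1 + X 1 ^ 2) ∈
        (Ideal.span {h (n + 1), h (n + 2)} : Ideal MvP) := by
  obtain ⟨B, hB⟩ : ∃ B, n = 2*B+1 ∨ n = 2*B+2 := ⟨(n-1)/2, by omega⟩
  rcases hB with hB | hB
  · -- n odd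
    set d : ℕ → ℚ := fun j => (-2:ℚ)^(B+1+j) - (-2:ℚ)^B * (-1/2:ℚ)^j with hd
    have hrec : ∀ j, 2*d (j+2) + 5*d (j+1) + 2*d j = 0 := by
      intro j; simp only [hd]; ring
    have hbd : 3*d 0 + 2*d 1 = 0 := by simp only [hd]; ring
    set P : MvP := ∑ j ∈ Finset.range (B+1), C (d j) * (X 1^(B-j) * h (2*j)) with hP
    have cP : coeff (Finsupp.single 0 (n-1)) P = d B := by
      rw [hP, coeff_sum, Finset.sum_eq_single B]
      · simp only [Nat.sub_self, pow_zero, one_mul, coeff_C_mul]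
        rw [show n-1 = 2*B by omega, h_top, mul_one]
      · intro j hj hjB
        simp only [Finset.mem_range] at hj
        rw [coeff_C_mul, Gzero 1 (B-j) _ _ (by rw [singleone]; omega), mul_zero]
      · intro hB'
        simp at hB'
    have hdB : d B = -2 * 4^B - 1 := by
      have k1 : ((-2:ℚ))^B * ((-1/2:ℚ))^B = 1 := by
        rw [← mul_pow]; norm_num
      have k2 : ((-2:ℚ))^(B+1+B) = -2 * ((4:ℚ))^B := by
        rw [show B+1+B = 2*B+1 by ring, pow_succ, pow_mul]
        norm_num [mul_comm]
      simp only [hd]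
      rw [k1, k2]
    have h4B : (0:ℚ) < 4^B := by positivity
    have hdB0 : d B ≠ 0 := by rw [hdB]; intro hc; nlinarith
    refine ⟨P, ?_, ?_, ?_⟩
    · intro h0
      rw [h0] at cP
      simp at cP
      exact hdB0 cP.symm
    · rw [hP]
      apply IsWeightedHomogeneous.sum
      intro j hj
      simp only [Finset.mem_range] at hj
      have t := (isWeightedHomogeneous_C (R := ℚ) ![1,2] (d j)).mul
        ((whX1pow (B-j)).mul (h_wh (2*j)))
      rw [show (0 + (2*(B-j) + 2*j)) = n-1 by omega] at t
      exact t
    · rw [show (2 * X 0 ^ 2 * X 1 + X 1 ^ 2 : MvP) = Qp from rfl]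
      rw [Ideal.mem_span_pair]
      refine ⟨2 * C (d B) * X 1 - 2 * C (d (B+1)) * X 0^2 + 2 * C (d (B+1)) * X 1,
        2 * C (d (B+1)) * X 0, ?_⟩
      rw [show n+1 = 2*B+2 by omega, show n+2 = 2*B+3 by omega]
      have hm := master0 d hrec hbd B
      have hy := hy2 (2*B)
      rw [show 2*B+2 = 2*B+2 from rfl] at hy
      linear_combination (-1 : MvP) * hm + 2 * C (d (B+1)) * hy
  · -- n even
    set d : ℕ → ℚ := fun j => (-2:ℚ)^(B+2+j) - (-2:ℚ)^B * (-1/2:ℚ)^j with hd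
    have hrec : ∀ j, 2*d (j+2) + 5*d (j+1) + 2*d j = 0 := by
      intro j; simp only [hd]; ring
    have hbd : 5*d 0 + 2*d 1 = 0 := by simp only [hd]; ring
    set P : MvP := ∑ j ∈ Finset.range (B+1), C (d j) * (X 1^(B-j) * h (2*j+1)) with hP
    have cP : coeff (Finsupp.single 0 (n-1)) P = d B := by
      rw [hP, coeff_sum, Finset.sum_eq_single B]
      · simp only [Nat.sub_self, pow_zero, one_mul, coeff_C_mul]
        rw [show n-1 = 2*B+1 by omega, h_top, mul_one]
      · intro j hj hjB
        simp only [Finset.mem_range] at hj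
        rw [coeff_C_mul, Gzero 1 (B-j) _ _ (by rw [singleone]; omega), mul_zero]
      · intro hB'
        simp at hB'
    have hdB : d B = 4 * 4^B - 1 := by
      have k1 : ((-2:ℚ))^B * ((-1/2:ℚ))^B = 1 := by
        rw [← mul_pow]; norm_num
      have k2 : ((-2:ℚ))^(B+2+B) = 4 * ((4:ℚ))^B := by
        rw [show B+2+B = 2*B+2 by ring, pow_add, pow_mul]
        norm_num [mul_comm]
      simp only [hd]
      rw [k1, k2]
    have h4B : (1:ℚ) ≤ 4^B := one_le_pow₀ (by norm_num)
    have hdB0 : d B ≠ 0 := by rw [hdB]; intro hc; nlinarith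
    refine ⟨P, ?_, ?_, ?_⟩
    · intro h0
      rw [h0] at cP
      simp at cP
      exact hdB0 cP.symm
    · rw [hP]
      apply IsWeightedHomogeneous.sum
      intro j hj
      simp only [Finset.mem_range] at hj
      have t := (isWeightedHomogeneous_C (R := ℚ) ![1,2] (d j)).mul
        ((whX1pow (B-j)).mul (h_wh (2*j+1)))
      rw [show (0 + (2*(B-j) + (2*j+1))) = n-1 by omega] at t
      exact t
    · rw [show (2 * X 0 ^ 2 * X 1 + X 1 ^ 2 : MvP) = Qp from rfl]
      rw [Ideal.mem_span_pair]
      refine ⟨2 * C (d B) * X 1 - 2 * C (d (B+1)) * X 0^2 + 2 * C (d (B+1)) * X 1,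
        2 * C (d (B+1)) * X 0, ?_⟩
      rw [show n+1 = 2*B+3 by omega, show n+2 = 2*B+4 by omega]
      have hm := master1 d hrec hbd B
      have hy : X 1^2 * h (2*B+1) = X 0^2 * h (2*B+3) - X 0 * h (2*B+4) - X 1 * h (2*B+3) :=
        hy2 (2*B+1)
      linear_combination (-1 : MvP) * hm + 2 * C (d (B+1)) * hy

lemma pair_app0 (s t : ℕ) : ((Finsupp.single (0:Fin 2) s + Finsupp.single 1 t : Fin 2 →₀ ℕ)) 0 = s := by
  simp [Finsupp.add_apply, Finsupp.single_apply]

lemma pair_app1 (s t : ℕ) : ((Finsupp.single (0:Fin 2) s + Finsupp.single 1 t : Fin 2 →₀ ℕ)) 1 = t := by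
  simp [Finsupp.add_apply, Finsupp.single_apply]

lemma coeff_XX (p q s t : ℕ) :
    coeff (Finsupp.single 0 s + Finsupp.single 1 t) ((X 0:MvP)^p * X 1^q) =
    if p = s ∧ q = t then 1 else 0 := by
  rw [X_pow_eq_monomial, X_pow_eq_monomial, monomial_mul, one_mul, coeff_monomial]
  by_cases hh : p = s ∧ q = t
  · rw [if_pos hh, if_pos (pair_eq.2 hh)]
  · rw [if_neg hh, if_neg (fun hc => hh (pair_eq.1 hc))]

lemma psi_hom {d : ℕ} {P : MvP} (hw : P.IsWeightedHomogeneous ![1,2] d) :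
    (psi P).IsHomogeneous d := by
  have hpsiP : psi P = ∑ b ∈ Finset.range (d/2+1),
      C (coeff (Finsupp.single 0 (d-2*b) + Finsupp.single 1 b) P) *
        ((X 0 + X 1)^(d-2*b) * (X 0*X 1)^b) := by
    conv_lhs => rw [NF hw]
    rw [map_sum]
    exact Finset.sum_congr rfl fun b _ => psi_monomial _ _ _
  rw [hpsiP]
  apply IsHomogeneous.sum
  intro b hb
  simp only [Finset.mem_range] at hb
  have t := (isHomogeneous_C (Fin 2) (coeff (Finsupp.single 0 (d-2*b) + Finsupp.single 1 b) P)).mul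
    (((((isHomogeneous_X ℚ 0).add (isHomogeneous_X ℚ 1))).pow (d-2*b)).mul
      (((isHomogeneous_X ℚ 0).mul (isHomogeneous_X ℚ 1)).pow b))
  rw [show (0 + (1*(d-2*b) + (1+1)*b)) = d by omega] at t
  exact t

lemma singleone' (s : ℕ) : (Finsupp.single (1 : Fin 2) s) 0 = 0 := by
  simp [Finsupp.single_apply]

lemma psi_NF {d : ℕ} {P : MvP} (hw : P.IsWeightedHomogeneous ![1,2] d) :
    psi P = ∑ b ∈ Finset.range (d/2+1),
      C (coeff (Finsupp.single 0 (d-2*b) + Finsupp.single 1 b) P) *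
        ((X 0 + X 1)^(d-2*b) * (X 0*X 1)^b) := by
  conv_lhs => rw [NF hw]
  rw [map_sum]
  exact Finset.sum_congr rfl fun b _ => psi_monomial _ _ _

lemma psi_Qp : psi Qp = 2*X 0^3*X 1 + 5*X 0^2*X 1^2 + 2*X 0*X 1^3 := by
  have hx : psi (X 0) = X 0 + X 1 := by simp [psi]
  have hy : psi (X 1) = X 0 * X 1 := by simp [psi]
  show psi (2 * X 0 ^ 2 * X 1 + X 1 ^ 2) = _
  rw [map_add, map_mul, map_mul, map_pow, map_pow, hx, hy, map_ofNat]
  ring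

lemma key_edge0 {n : ℕ} {P : MvP} (hw : P.IsWeightedHomogeneous ![1,2] (n-1))
    (hc0 : coeff (Finsupp.single 0 (n-1)) P = 0) :
    coeff (Finsupp.single 0 (n-1)) (psi P) = 0 := by
  have hfac : coeff (Finsupp.single 0 (n-1-2*0) + Finsupp.single 1 0) P = 0 := by
    simpa using hc0
  rw [psi_NF hw, coeff_sum]
  apply Finset.sum_eq_zero
  intro b _
  rcases Nat.eq_zero_or_pos b with rfl | hpos
  · rw [coeff_C_mul, hfac, zero_mul]
  · rw [coeff_C_mul,
      show ((X 0 + X 1 : MvP))^(n-1-2*b) * (X 0*X 1)^b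
        = X 1^b * ((X 0+X 1)^(n-1-2*b) * X 0^b) by ring,
      Gzero 1 b _ _ (by rw [singleone]; omega), mul_zero]

lemma key_edge1 {n : ℕ} {P : MvP} (hw : P.IsWeightedHomogeneous ![1,2] (n-1))
    (hc0 : coeff (Finsupp.single 0 (n-1)) P = 0) :
    coeff (Finsupp.single 1 (n-1)) (psi P) = 0 := by
  have hfac : coeff (Finsupp.single 0 (n-1-2*0) + Finsupp.single 1 0) P = 0 := by
    simpa using hc0
  rw [psi_NF hw, coeff_sum]
  apply Finset.sum_eq_zero
  intro b _
  rcases Nat.eq_zero_or_pos b with rfl | hpos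
  · rw [coeff_C_mul, hfac, zero_mul]
  · rw [coeff_C_mul,
      show ((X 0 + X 1 : MvP))^(n-1-2*b) * (X 0*X 1)^b
        = X 0^b * ((X 0+X 1)^(n-1-2*b) * X 1^b) by ring,
      Gzero 0 b _ _ (by rw [singleone']; omega), mul_zero]

lemma partII (n : ℕ) (hn : 1 ≤ n) (P : MvP) (hP0 : P ≠ 0)
    (hw : P.IsWeightedHomogeneous ![1,2] (n-1))
    (hmem : P * (2 * X 0 ^ 2 * X 1 + X 1 ^ 2) ∈
      (Ideal.span {h (n + 1), h (n + 2)} : Ideal MvP)) :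
    coeff (Finsupp.single 0 (n-1)) P ≠ 0 := by
  intro hc0
  obtain ⟨a, b, hab⟩ := Ideal.mem_span_pair.1 hmem
  have hab' : P * Qp = a * h (n+1) + b * h (n+2) := by
    rw [show (Qp : MvP) = 2 * X 0 ^ 2 * X 1 + X 1 ^ 2 from rfl]
    exact hab.symm
  set W : MvP := ((X 0 - X 1) * psi P) * psi Qp with hWdef
  have key0 := key_edge0 hw hc0
  have key1 := key_edge1 hw hc0
  -- W in terms of the ideal generators
  have hW2 : W = psi a * (X 0^(n+2) - X 1^(n+2)) + psi b * (X 0^(n+3) - X 1^(n+3)) := by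
    have hPQ : psi P * psi Qp = psi a * psi (h (n+1)) + psi b * psi (h (n+2)) := by
      rw [← map_mul, ← map_mul, ← map_mul, ← map_add, hab']
    have h1 : (X 0 - X 1) * psi (h (n+1)) = X 0^(n+2) - X 1^(n+2) := psi_h (n+1)
    have h2 : (X 0 - X 1) * psi (h (n+2)) = X 0^(n+3) - X 1^(n+3) := psi_h (n+2)
    have e : W = (X 0 - X 1) * (psi P * psi Qp) := by rw [hWdef]; ring
    rw [e, hPQ]
    linear_combination psi a * h1 + psi b * h2
  -- vanishing of middle coefficients
  have hWc : ∀ s t : ℕ, s ≤ n+1 → t ≤ n+1 →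
      coeff (Finsupp.single 0 s + Finsupp.single 1 t) W = 0 := by
    intro s t hs ht
    rw [hW2, coeff_add]
    have c1 : coeff (Finsupp.single 0 s + Finsupp.single 1 t)
        (psi a * (X 0^(n+2) - X 1^(n+2))) = 0 := by
      rw [show psi a * (X 0^(n+2) - X 1^(n+2))
          = X 0^(n+2) * psi a - X 1^(n+2) * psi a by ring, coeff_sub,
        Gzero 0 (n+2) _ _ (by rw [pair_app0]; omega),
        Gzero 1 (n+2) _ _ (by rw [pair_app1]; omega), sub_zero]
    have c2 : coeff (Finsupp.single 0 s + Finsupp.single 1 t)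
        (psi b * (X 0^(n+3) - X 1^(n+3))) = 0 := by
      rw [show psi b * (X 0^(n+3) - X 1^(n+3))
          = X 0^(n+3) * psi b - X 1^(n+3) * psi b by ring, coeff_sub,
        Gzero 0 (n+3) _ _ (by rw [pair_app0]; omega),
        Gzero 1 (n+3) _ _ (by rw [pair_app1]; omega), sub_zero]
    rw [c1, c2, add_zero]
  -- homogeneity of W
  have hWhom : W.IsHomogeneous (n+4) := by
    have hsub : ((X 0 - X 1 : MvP)).IsHomogeneous 1 :=
      (isHomogeneous_X ℚ 0).sub (isHomogeneous_X ℚ 1)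
    have hQ4 : (psi Qp).IsHomogeneous 4 := by
      rw [psi_Qp]
      have h2 : ((2:MvP)).IsHomogeneous 0 := by
        rw [show (2:MvP) = C 2 from (map_ofNat C 2).symm]; exact isHomogeneous_C (Fin 2) (2:ℚ)
      have h5 : ((5:MvP)).IsHomogeneous 0 := by
        rw [show (5:MvP) = C 5 from (map_ofNat C 5).symm]; exact isHomogeneous_C (Fin 2) (5:ℚ)
      have t1 := (h2.mul ((isHomogeneous_X ℚ 0).pow 3)).mul (isHomogeneous_X ℚ 1)
      have t2 := (h5.mul ((isHomogeneous_X ℚ 0).pow 2)).mul ((isHomogeneous_X ℚ 1).pow 2)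
      have t3 := (h2.mul (isHomogeneous_X ℚ 0)).mul ((isHomogeneous_X ℚ 1).pow 3)
      norm_num at t1 t2 t3
      exact (t1.add t2).add t3
    have t := (hsub.mul (psi_hom hw)).mul hQ4
    rw [show (1 + (n-1) + 4) = n+4 by omega] at t
    exact t
  -- the two X1/X0 factorizations of W
  have hWX1 : W = X 1^1 * (((X 0 - X 1) * psi P) *
      (2*X 0^3 + 5*X 0^2*X 1 + 2*X 0*X 1^2)) := by
    rw [hWdef, psi_Qp]; ring
  have hWX0 : W = X 0^1 * (((X 0 - X 1) * psi P) *
      (2*X 0^2*X 1 + 5*X 0*X 1^2 + 2*X 1^3)) := by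
    rw [hWdef, psi_Qp]; ring
  -- W = γ u^{n+2} v² + δ u² v^{n+2}
  have hWform : W = C (coeff (Finsupp.single 0 (n+2) + Finsupp.single 1 2) W) *
      (X 0^(n+2) * X 1^2) + C (coeff (Finsupp.single 0 2 + Finsupp.single 1 (n+2)) W) *
      (X 0^2 * X 1^(n+2)) := by
    apply MvPolynomial.ext
    intro m
    obtain ⟨s, t, rfl⟩ : ∃ s t, m = Finsupp.single 0 s + Finsupp.single 1 t :=
      ⟨m 0, m 1, mdecomp m⟩
    rw [coeff_add, coeff_C_mul, coeff_C_mul, coeff_XX, coeff_XX]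
    by_cases hst : s + t = n+4
    · by_cases hmid : s ≤ n+1 ∧ t ≤ n+1
      · rw [hWc s t hmid.1 hmid.2, if_neg (by omega), if_neg (by omega)]
        ring
      · have hcases : (s = n+2 ∧ t = 2) ∨ (s = 2 ∧ t = n+2) ∨ t = 0 ∨ t = 1 ∨ s = 0 ∨ s = 1 := by
          omega
        rcases hcases with ⟨rfl, rfl⟩ | ⟨rfl, rfl⟩ | rfl | rfl | rfl | rfl
        · rw [if_pos ⟨rfl, rfl⟩, if_neg (by omega)]
          ring
        · rw [if_neg (by omega), if_pos ⟨rfl, rfl⟩]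
          ring
        · -- t = 0
          rw [hWX1, Gzero 1 1 _ _ (by rw [pair_app1]; omega), if_neg (by omega),
            if_neg (by omega)]
          ring
        · -- t = 1, s = n+3
          have hs : s = n+3 := by omega
          subst hs
          rw [hWX1,
            show (Finsupp.single (0:Fin 2) (n+3) + Finsupp.single 1 1 : Fin 2 →₀ ℕ)
              = Finsupp.single 1 1 + Finsupp.single 0 (n+3) from add_comm _ _,
            Gexact]
          rw [show ((X 0 - X 1) * psi P) * (2*X 0^3 + 5*X 0^2*X 1 + 2*X 0*X 1^2)
              = X 0^3 * (2 * ((X 0 - X 1) * psi P))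
                + X 1^1 * (((X 0 - X 1) * psi P) * (5*X 0^2 + 2*X 0*X 1)) by ring,
            coeff_add, Gzero 1 1 _ _ (by rw [singleone]; omega), add_zero]
          rw [show (Finsupp.single (0:Fin 2) (n+3) : Fin 2 →₀ ℕ)
              = Finsupp.single 0 3 + Finsupp.single 0 n by
                rw [← Finsupp.single_add, show 3+n = n+3 by omega],
            Gexact]
          rw [show (2:MvP) * ((X 0 - X 1) * psi P)
              = C 2 * ((X 0 - X 1) * psi P) by rw [map_ofNat], coeff_C_mul]
          rw [show ((X 0 - X 1) * psi P : MvP)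
              = X 0^1 * psi P - X 1^1 * psi P by ring, coeff_sub,
            Gzero 1 1 _ _ (by rw [singleone]; omega), sub_zero]
          rw [show (Finsupp.single (0:Fin 2) n : Fin 2 →₀ ℕ)
              = Finsupp.single 0 1 + Finsupp.single 0 (n-1) by
                rw [← Finsupp.single_add, show 1+(n-1) = n by omega],
            Gexact, key0]
          rw [if_neg (by omega), if_neg (by omega)]
          ring
        · -- s = 0
          rw [hWX0, Gzero 0 1 _ _ (by rw [pair_app0]; omega), if_neg (by omega),
            if_neg (by omega)]
          ring
        · -- s = 1, t = n+3
          have ht : t = n+3 := by omega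
          subst ht
          rw [hWX0,
            show (Finsupp.single (0:Fin 2) 1 + Finsupp.single 1 (n+3) : Fin 2 →₀ ℕ)
              = Finsupp.single 0 1 + Finsupp.single 1 (n+3) from rfl,
            Gexact]
          rw [show ((X 0 - X 1) * psi P) * (2*X 0^2*X 1 + 5*X 0*X 1^2 + 2*X 1^3)
              = X 1^3 * (2 * ((X 0 - X 1) * psi P))
                + X 0^1 * (((X 0 - X 1) * psi P) * (2*X 0*X 1 + 5*X 1^2)) by ring,
            coeff_add, Gzero 0 1 _ _ (by rw [singleone']; omega), add_zero]
          rw [show (Finsupp.single (1:Fin 2) (n+3) : Fin 2 →₀ ℕ)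
              = Finsupp.single 1 3 + Finsupp.single 1 n by
                rw [← Finsupp.single_add, show 3+n = n+3 by omega],
            Gexact]
          rw [show (2:MvP) * ((X 0 - X 1) * psi P)
              = C 2 * ((X 0 - X 1) * psi P) by rw [map_ofNat], coeff_C_mul]
          rw [show ((X 0 - X 1) * psi P : MvP)
              = X 0^1 * psi P - X 1^1 * psi P by ring, coeff_sub,
            Gzero 0 1 _ _ (by rw [singleone']; omega), zero_sub]
          rw [show (Finsupp.single (1:Fin 2) n : Fin 2 →₀ ℕ)
              = Finsupp.single 1 1 + Finsupp.single 1 (n-1) by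
                rw [← Finsupp.single_add, show 1+(n-1) = n by omega],
            Gexact, key1]
          rw [if_neg (by omega), if_neg (by omega)]
          ring
    · rw [hWhom.coeff_eq_zero (by rw [degree_pair]; omega),
        if_neg (by omega), if_neg (by omega)]
      ring
  -- evaluation at (1,-2) and (-2,1)
  set g1 : ℚ := coeff (Finsupp.single 0 (n+2) + Finsupp.single 1 2) W with hg1def
  set g2 : ℚ := coeff (Finsupp.single 0 2 + Finsupp.single 1 (n+2)) W with hg2def
  have hevQ1 : eval ![(1:ℚ), -2] (psi Qp) = 0 := by
    rw [psi_Qp]; simp; norm_num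
  have hevQ2 : eval ![(-2:ℚ), 1] (psi Qp) = 0 := by
    rw [psi_Qp]; simp; norm_num
  have E1 : g1 * 4 + g2 * (-2:ℚ)^(n+2) = 0 := by
    have := congrArg (eval ![(1:ℚ), -2]) hWform
    rw [hWdef] at this
    simp only [map_mul, map_add, hevQ1, mul_zero] at this
    simp [eval_pow] at this
    linarith [this]
  have E2 : g1 * (-2:ℚ)^(n+2) + g2 * 4 = 0 := by
    have := congrArg (eval ![(-2:ℚ), 1]) hWform
    rw [hWdef] at this
    simp only [map_mul, map_add, hevQ2, mul_zero] at this
    simp [eval_pow] at this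
    linarith [this]
  have hpow : ((-2:ℚ))^(n+2) * (-2)^(n+2) = 4^(n+2) := by
    rw [← mul_pow]; norm_num
  have h16 : (16:ℚ) < 4^(n+2) := by
    have : (4:ℚ)^3 ≤ 4^(n+2) := pow_le_pow_right₀ (by norm_num) (by omega)
    norm_num at this
    linarith
  have hg2 : g2 = 0 := by
    have hkey : g2 * (16 - 4^(n+2)) = 0 := by
      linear_combination 4*E2 - (-2:ℚ)^(n+2)*E1 + g2 * hpow
    rcases mul_eq_zero.1 hkey with h0 | h0
    · exact h0
    · exfalso; linarith
  have hg1 : g1 = 0 := by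
    rw [hg2] at E1
    linarith [E1]
  have hW0 : W = 0 := by
    rw [hWform, hg1, hg2]
    simp
  -- conclude psi P = 0
  have hQne : psi Qp ≠ 0 := by
    intro h0
    have := congrArg (eval ![(1:ℚ), 1]) h0
    rw [psi_Qp] at this
    simp at this
    norm_num at this
  have hXne : (X 0 - X 1 : MvP) ≠ 0 := by
    intro h0
    have := congrArg (eval ![(1:ℚ), 0]) h0
    simp at this
  have hpsi0 : psi P = 0 := by
    have h1 : ((X 0 - X 1) * psi P) * psi Qp = 0 := by rw [← hWdef, hW0]
    rcases mul_eq_zero.1 h1 with h2 | h2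
    · rcases mul_eq_zero.1 h2 with h3 | h3
      · exact absurd h3 hXne
      · exact h3
    · exact absurd h2 hQne
  -- all coefficients of P vanish
  have hall : ∀ c, c ≤ (n-1)/2 →
      coeff (Finsupp.single 0 (n-1-2*c) + Finsupp.single 1 c) P = 0 := by
    intro c
    induction c using Nat.strong_induction_on with
    | _ c ih =>
      intro hc
      have hco : coeff (Finsupp.single 0 ((n-1-2*c)+c) + Finsupp.single 1 c) (psi P) = 0 := by
        rw [hpsi0, coeff_zero]
      rw [psi_NF hw, coeff_sum, Finset.sum_eq_single c] at hco
      · rw [coeff_C_mul] at hco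
        have hone : coeff (Finsupp.single 0 ((n-1-2*c)+c) + Finsupp.single 1 c)
            (((X 0 + X 1):MvP)^(n-1-2*c) * (X 0*X 1)^c) = 1 := by
          rw [show (((X 0 + X 1):MvP)^(n-1-2*c) * (X 0*X 1)^c)
              = X 0^c * (X 1^c * (X 0+X 1)^(n-1-2*c)) by ring]
          rw [show (Finsupp.single (0:Fin 2) ((n-1-2*c)+c) + Finsupp.single 1 c : Fin 2 →₀ ℕ)
              = Finsupp.single 0 c + (Finsupp.single 1 c
                + (Finsupp.single 0 (n-1-2*c) + Finsupp.single 1 0)) by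
                rw [Finsupp.single_zero, add_zero,
                  show (n-1-2*c)+c = c+(n-1-2*c) by omega, Finsupp.single_add]
                abel]
          rw [Gexact, Gexact, Lbin, if_pos (by omega), Nat.choose_self]
          norm_num
        rw [hone, mul_one] at hco
        exact hco
      · intro k hk hkc
        simp only [Finset.mem_range] at hk
        rcases lt_or_gt_of_ne hkc with hlt | hgt
        · rw [coeff_C_mul, ih k hlt (by omega), zero_mul]
        · rw [coeff_C_mul,
            show (((X 0 + X 1):MvP)^(n-1-2*k) * (X 0*X 1)^k)
              = X 1^k * ((X 0+X 1)^(n-1-2*k) * X 0^k) by ring,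
            Gzero 1 k _ _ (by rw [pair_app1]; omega), mul_zero]
      · intro hc'
        simp only [Finset.mem_range] at hc'
        omega
  have hPzero : P = 0 := by
    rw [NF hw]
    apply Finset.sum_eq_zero
    intro c hc
    simp only [Finset.mem_range] at hc
    rw [hall c (by omega)]
    exact monomial_zero
  exact hP0 hPzero


/-- For `Q = 2x²y + y²` (up to the factor 9 the class of the Fano variety of lines of a
smooth cubic hypersurface in the Chow ring of the Grassmannian of lines in `ℙ^{n+1}`):
(i) there is a nonzero weighted homogeneous `P` of degree `n−1` with
`P·Q ∈ (h_{n+1}, h_{n+2})`, and (ii) every such `P` has nonzero coefficient of `x^{n−1}`. -/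
theorem stmt11 (n : ℕ) (hn : 1 ≤ n) :
    (∃ P : MvPolynomial (Fin 2) ℚ, P ≠ 0 ∧ P.IsWeightedHomogeneous ![1, 2] (n - 1) ∧
      P * (2 * X 0 ^ 2 * X 1 + X 1 ^ 2) ∈
        (Ideal.span {h (n + 1), h (n + 2)} : Ideal (MvPolynomial (Fin 2) ℚ))) ∧
    (∀ P : MvPolynomial (Fin 2) ℚ, P ≠ 0 → P.IsWeightedHomogeneous ![1, 2] (n - 1) →
      P * (2 * X 0 ^ 2 * X 1 + X 1 ^ 2) ∈
        (Ideal.span {h (n + 1), h (n + 2)} : Ideal (MvPolynomial (Fin 2) ℚ)) →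
      coeff (Finsupp.single 0 (n - 1)) P ≠ 0) := by
  exact ⟨partI n hn, fun P hP0 hw hmem => partII n hn P hP0 hw hmem⟩
end
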